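/- Let W ≥ 0 and 1 ≤ L ≤ m be integers, let a, â : Fin m → ℤ satisfy |a k − â k| ≤ W for every k, and let S ⊆ Fin m with |S| < L. If k* ∉ S attains the minimum of a over the complement of S (i.e. a k* = min_{k ∉ S} a k), then â k* ≤ C^L(â) + 2W. -/

import Mathlib

/-- The `L`-th smallest value (1-indexed) among `a 0, …, a (m-1)`:
the entry at position `L` of the list of values sorted in non-decreasing order. -/
def kthSmallest {m : ℕ} (a : Fin m → ℤ) (L : ℕ) : ℤ :=
  (List.insertionSort (· ≤ ·) (List.ofFn a)).getD (L - 1) 0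

lemma countP_bridge {m : ℕ} (a : Fin m → ℤ) (p : ℤ → Prop) [DecidablePred p] :
    (List.insertionSort (· ≤ ·) (List.ofFn a)).countP (fun x => decide (p x))
      = (Finset.univ.filter fun i => p (a i)).card := by
  rw [(List.perm_insertionSort _ _).countP_eq]
  have h1 : (List.ofFn a).countP (fun x => decide (p x))
      = Multiset.countP p (↑(List.ofFn a)) := (Multiset.coe_countP _ _).symm
  rw [h1, ← Fin.univ_val_map, Multiset.countP_map]
  rfl

lemma lemA {m : ℕ} (a : Fin m → ℤ) (L : ℕ) (hL1 : 1 ≤ L) (hLm : L ≤ m) :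
    L ≤ (Finset.univ.filter fun i => a i ≤ kthSmallest a L).card := by
  classical
  set s := List.insertionSort (· ≤ ·) (List.ofFn a) with hsdef
  have hs : s.Pairwise (· ≤ ·) := List.pairwise_insertionSort _ _
  have hlen : s.length = m := by
    rw [hsdef, (List.perm_insertionSort _ _).length_eq, List.length_ofFn]
  have hLlen : L ≤ s.length := hlen ▸ hLm
  have hL1lt : L - 1 < s.length := by omega
  have hc : kthSmallest a L = s[L-1]'hL1lt := (List.getD_eq_getElem _ _ hL1lt)
  rw [← countP_bridge a (fun x => x ≤ kthSmallest a L), ← hsdef]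
  have hsplit : s.countP (fun x => decide (x ≤ kthSmallest a L))
      = (s.take L).countP (fun x => decide (x ≤ kthSmallest a L))
        + (s.drop L).countP (fun x => decide (x ≤ kthSmallest a L)) := by
    rw [← List.countP_append, List.take_append_drop]
  have htake : (s.take L).countP (fun x => decide (x ≤ kthSmallest a L)) = L := by
    have hall : ∀ x ∈ s.take L, decide (x ≤ kthSmallest a L) = true := by
      intro x hx
      obtain ⟨i, hi, rfl⟩ := List.getElem_of_mem hx
      rw [List.length_take] at hi
      have hi' : i < s.length := by omega
      rw [List.getElem_take]
      simp only [decide_eq_true_eq, hc]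
      exact hs.rel_get_of_le (by simp; omega)
    have := List.countP_eq_length.mpr hall
    rw [this, List.length_take]
    omega
  omega

lemma lemB {m : ℕ} (a : Fin m → ℤ) (L : ℕ) (c : ℤ) (hL1 : 1 ≤ L) (hLm : L ≤ m)
    (h : L ≤ (Finset.univ.filter fun i => a i ≤ c).card) :
    kthSmallest a L ≤ c := by
  classical
  by_contra hcon
  push_neg at hcon
  rw [← countP_bridge a (fun x => x ≤ c)] at h
  set s := List.insertionSort (· ≤ ·) (List.ofFn a) with hsdef
  have hs : s.Pairwise (· ≤ ·) := List.pairwise_insertionSort _ _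
  have hlen : s.length = m := by
    rw [hsdef, (List.perm_insertionSort _ _).length_eq, List.length_ofFn]
  have hL1lt : L - 1 < s.length := by omega
  have hc : kthSmallest a L = s[L-1]'hL1lt := (List.getD_eq_getElem _ _ hL1lt)
  have hsplit : s.countP (fun x => decide (x ≤ c))
      = (s.take (L-1)).countP (fun x => decide (x ≤ c))
        + (s.drop (L-1)).countP (fun x => decide (x ≤ c)) := by
    rw [← List.countP_append, List.take_append_drop]
  have hdrop : (s.drop (L-1)).countP (fun x => decide (x ≤ c)) = 0 := by
    rw [List.countP_eq_zero]
    intro x hx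
    obtain ⟨i, hi, rfl⟩ := List.getElem_of_mem hx
    rw [List.getElem_drop]
    simp only [decide_eq_true_eq, not_le]
    refine lt_of_lt_of_le hcon ?_
    rw [hc]
    exact hs.rel_get_of_le (a := ⟨L-1, hL1lt⟩) (b := ⟨L-1+i, by rw [List.length_drop] at hi; omega⟩) (Fin.mk_le_mk.mpr (by omega))
  have htake : (s.take (L-1)).countP (fun x => decide (x ≤ c)) ≤ L - 1 := by
    calc (s.take (L-1)).countP (fun x => decide (x ≤ c)) ≤ (s.take (L-1)).length :=
          List.countP_le_length
      _ ≤ L - 1 := by rw [List.length_take]; omega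
  omega

theorem stmt9 (m L : ℕ) (W : ℤ) (hW : 0 ≤ W) (hL1 : 1 ≤ L) (hLm : L ≤ m)
    (a ahat : Fin m → ℤ) (hclose : ∀ k, |a k - ahat k| ≤ W)
    (S : Finset (Fin m)) (hS : S.card < L)
    (kstar : Fin m) (hks : kstar ∉ S)
    (hmin : ∀ k ∉ S, a kstar ≤ a k) :
    ahat kstar ≤ kthSmallest ahat L + 2 * W := by
  classical
  have hcl : ∀ k, ahat k ≤ a k + W ∧ a k ≤ ahat k + W := by
    intro k
    have := abs_sub_le_iff.mp (hclose k)
    constructor <;> linarith [this.1, this.2]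
  -- a kstar ≤ kthSmallest a L
  have h1 : a kstar ≤ kthSmallest a L := by
    have hcard := lemA a L hL1 hLm
    have hnsub : ¬ (Finset.univ.filter fun i => a i ≤ kthSmallest a L) ⊆ S := by
      intro hsub
      have := Finset.card_le_card hsub
      omega
    obtain ⟨k, hkT, hkS⟩ := Finset.not_subset.mp hnsub
    exact le_trans (hmin k hkS) (Finset.mem_filter.mp hkT).2
  -- kthSmallest a L ≤ kthSmallest ahat L + W
  have h2 : kthSmallest a L ≤ kthSmallest ahat L + W := by
    apply lemB a L _ hL1 hLm
    refine le_trans (lemA ahat L hL1 hLm) (Finset.card_le_card ?_)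
    intro i hi
    simp only [Finset.mem_filter, Finset.mem_univ, true_and] at hi ⊢
    linarith [(hcl i).2]
  linarith [(hcl kstar).1]
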